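/- arXiv:0807.1583 — 2 statements merged into one kernel-verified Lean document; each statement's English description precedes it below -/
import Mathlib

section
/- Let F^λ[G] be an upper or lower Lie nilpotent twisted group algebra over a field of characteristic p > 0 and suppose g, h ∈ G commute. Then the basis elements commute as well: [g̃, h̃] = 0, equivalently λ(g,h) = λ(h,g). -/
/-- Additive subgroup generated by products `s * t` with `s ∈ S`, `t ∈ T`. -/
def aprod {R : Type*} [NonUnitalRing R] (S T : AddSubgroup R) : AddSubgroup R :=
  AddSubgroup.closure {x : R | ∃ s ∈ S, ∃ t ∈ T, x = s * t}

/-- Additive subgroup generated by Lie commutators `s*t - t*s`. -/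
def lbrk {R : Type*} [NonUnitalRing R] (S T : AddSubgroup R) : AddSubgroup R :=
  AddSubgroup.closure {x : R | ∃ s ∈ S, ∃ t ∈ T, x = s * t - t * s}

/-- The lower Lie central series `γ₁(R) = R`, `γₙ(R) = [γₙ₋₁(R), R]`. -/
def lieGamma (R : Type*) [NonUnitalRing R] : ℕ → AddSubgroup R
  | 0 => ⊤
  | 1 => ⊤
  | n + 2 => lbrk (lieGamma R (n + 1)) ⊤

/-- The `n`-th lower Lie power `R^[n] = γₙ(R)·R`. -/
def lowerLiePow (R : Type*) [NonUnitalRing R] (n : ℕ) : AddSubgroup R :=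
  aprod (lieGamma R n) ⊤

/-- The `n`-th upper Lie power: `R^(1) = R`, `R^(n) = [R^(n-1), R]·R`. -/
def upperLiePow (R : Type*) [NonUnitalRing R] : ℕ → AddSubgroup R
  | 0 => ⊤
  | 1 => ⊤
  | n + 2 => aprod (lbrk (upperLiePow R (n + 1)) ⊤) ⊤

lemma lbrk_mono {R : Type*} [NonUnitalRing R] {S S' : AddSubgroup R} (hss : S ≤ S')
    (T : AddSubgroup R) : lbrk S T ≤ lbrk S' T := by
  apply AddSubgroup.closure_mono
  rintro x ⟨s, hs, t, ht, rfl⟩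
  exact ⟨s, hss hs, t, ht, rfl⟩

lemma le_aprod {R : Type*} [Ring R] (S : AddSubgroup R) : S ≤ aprod S ⊤ := by
  intro x hx
  exact AddSubgroup.subset_closure ⟨x, hx, 1, trivial, (mul_one x).symm⟩

lemma gamma_le_upper (R : Type*) [Ring R] : ∀ n, lieGamma R n ≤ upperLiePow R n
  | 0 => le_rfl
  | 1 => le_rfl
  | (n+2) => le_trans (lbrk_mono (gamma_le_upper R (n+1)) ⊤) (le_aprod _)

/-- In an upper or lower Lie nilpotent twisted group algebra of characteristic
`p > 0`, commuting group elements have commuting basis elements: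
`[g̃, h̃] = 0`, i.e. `λ(g,h) = λ(h,g)`. -/
theorem stmt_13 {F : Type*} [Field F] {G : Type*} [Group G]
    {A : Type*} [Ring A] [Algebra F A]
    (l : G → G → Fˣ) (B : Module.Basis G F A)
    (hone : B 1 = 1)
    (hmul : ∀ g h : G, B g * B h = ((l g h : F)) • B (g * h))
    (hcoc : ∀ a b c : G, l a (b * c) * l b c = l (a * b) c * l a b)
    (hnorm : ∀ g : G, l g 1 = 1 ∧ l 1 g = 1)
    (p : ℕ) [Fact p.Prime] [CharP F p]
    (hLie : ∃ m : ℕ, lowerLiePow A m = ⊥ ∨ upperLiePow A m = ⊥)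
    (g h : G) (hgh : g * h = h * g) :
    ⁅B g, B h⁆ = 0 ∧ l g h = l h g := by
  classical
  haveI : Nontrivial A := nontrivial_of_ne (B 1) 0 (B.ne_zero 1)
  haveI : NoZeroSMulDivisors F A := inferInstance
  set c : F := (l g h : F) - (l h g : F) with hc
  set u : A := B (g * h) with hu
  -- basic commutator computation
  have hz : B g * B h - B h * B g = c • u := by
    rw [hc, hu, sub_smul, hmul, hmul, hgh]
  have hub : (l g h : F) • (u * B g - B g * u) = (-c) • (B g * u) := by
    have h1 : (l g h : F) • u = B g * B h := (hmul g h).symm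
    have h2 : B g * (B h * B g - B g * B h) = (-c) • (B g * u) := by
      have hthis : B h * B g - B g * B h = (-c) • u := by
        rw [neg_smul, ← hz, neg_sub]
      rw [hthis, mul_smul_comm]
    calc (l g h : F) • (u * B g - B g * u)
        = ((l g h : F) • u) * B g - B g * ((l g h : F) • u) := by
          rw [smul_sub, smul_mul_assoc, mul_smul_comm]
      _ = B g * B h * B g - B g * (B g * B h) := by rw [h1]
      _ = B g * (B h * B g - B g * B h) := by noncomm_ring
      _ = (-c) • (B g * u) := h2
  -- key induction: powers of c appear in the lower central series
  have key : ∀ k : ℕ, c ^ (k+1) • (B g ^ k * u) ∈ lieGamma A (k+2) := by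
    intro k
    induction k with
    | zero =>
      have he : c ^ 1 • ((B g) ^ 0 * u) = B g * B h - B h * B g := by
        rw [pow_one, pow_zero, one_mul, hz]
      rw [he]
      show _ ∈ lbrk (lieGamma A 1) ⊤
      exact AddSubgroup.subset_closure ⟨B g, by simp [lieGamma], B h, trivial, rfl⟩
    | succ k ih =>
      set x := c ^ (k+1) • (B g ^ k * u) with hx
      set y := (-(l g h : F)) • B g with hy
      have hcomm : B g ^ k * B g = B g * B g ^ k :=
        ((Commute.refl (B g)).pow_left k).eq
      have heq : x * y - y * x = c ^ (k+2) • (B g ^ (k+1) * u) := by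
        have hub' : (-(l g h : F)) • (u * B g - B g * u) = c • (B g * u) := by
          rw [neg_smul, hub, neg_smul, neg_neg]
        have ex : x * y = (c ^ (k+1) * (-(l g h : F))) • (B g ^ k * (u * B g)) := by
          rw [hx, hy, smul_mul_assoc, mul_smul_comm, smul_smul, mul_assoc]
        have ey : y * x = (c ^ (k+1) * (-(l g h : F))) • (B g ^ k * (B g * u)) := by
          rw [hx, hy, smul_mul_assoc, mul_smul_comm, smul_smul,
            mul_comm (-(l g h : F)) (c ^ (k+1)), ← mul_assoc, ← hcomm, mul_assoc]
        calc x * y - y * x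
            = (c ^ (k+1) * (-(l g h : F))) • (B g ^ k * (u * B g - B g * u)) := by
              rw [ex, ey, ← smul_sub, ← mul_sub]
          _ = c ^ (k+1) • (B g ^ k * ((-(l g h : F)) • (u * B g - B g * u))) := by
              rw [mul_smul_comm, smul_smul]
          _ = c ^ (k+1) • (B g ^ k * (c • (B g * u))) := by rw [hub']
          _ = c ^ (k+2) • (B g ^ (k+1) * u) := by
              rw [mul_smul_comm, smul_smul, ← mul_assoc, ← pow_succ, ← pow_succ]
      rw [← heq]
      show _ ∈ lbrk (lieGamma A (k+2)) ⊤
      exact AddSubgroup.subset_closure ⟨x, ih, y, trivial, rfl⟩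
  -- units
  have hBu : ∀ a : G, IsUnit (B a) := by
    intro a
    have hsym : l a⁻¹ a = l a a⁻¹ := by
      have := hcoc a a⁻¹ a
      simpa [mul_inv_cancel, inv_mul_cancel, (hnorm a).1, (hnorm a).2] using this
    refine ⟨⟨B a, ((l a a⁻¹ : F))⁻¹ • B a⁻¹, ?_, ?_⟩, rfl⟩
    · rw [mul_smul_comm, hmul, mul_inv_cancel, hone, smul_smul,
        inv_mul_cancel₀ (Units.ne_zero (l a a⁻¹)), one_smul]
    · rw [smul_mul_assoc, hmul, inv_mul_cancel, hone, hsym, smul_smul,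
        inv_mul_cancel₀ (Units.ne_zero (l a a⁻¹)), one_smul]
  -- extract m and conclude
  obtain ⟨m, hm⟩ := hLie
  have hγ : lieGamma A m = ⊥ := by
    rcases hm with hm | hm
    · exact le_bot_iff.mp (hm ▸ le_aprod (lieGamma A m))
    · exact le_bot_iff.mp (hm ▸ gamma_le_upper A m)
  have hc0 : c = 0 := by
    match m, hγ with
    | 0, hγ =>
      exact absurd (B.ne_zero 1) (by
        have : B 1 ∈ (⊥ : AddSubgroup A) := hγ ▸ AddSubgroup.mem_top (B 1)
        simpa using this)
    | 1, hγ =>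
      exact absurd (B.ne_zero 1) (by
        have : B 1 ∈ (⊥ : AddSubgroup A) := hγ ▸ AddSubgroup.mem_top (B 1)
        simpa using this)
    | (n+2), hγ =>
      have h0 : c ^ (n+1) • (B g ^ n * u) = 0 := by
        have := key n
        rw [hγ] at this
        exact AddSubgroup.mem_bot.mp this
      have hwu : IsUnit (B g ^ n * u) := ((hBu g).pow n).mul (hBu (g * h))
      rcases smul_eq_zero.mp h0 with hcz | hw0
      · exact pow_eq_zero_iff (Nat.succ_ne_zero n) |>.mp hcz
      · exact absurd hw0 hwu.ne_zero
  constructor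
  · rw [Ring.lie_def, hz, hc0, zero_smul]
  · exact Units.ext (sub_eq_zero.mp (by rw [← hc, hc0]))
end

section
/- Let R be an associative ring of characteristic p > 0 with R^[3] nilpotent and R^[2]/R^[3] central considerations as follows: then R^[2] is a nil ideal. Specifically, for every x ∈ R^[2] there exists s with x^{p^s} = 0. -/
section Aux

variable {R : Type*} [Ring R]

lemma aprod_mono {S S' T : AddSubgroup R} (h : S ≤ S') : aprod S T ≤ aprod S' T := by
  apply AddSubgroup.closure_mono
  rintro x ⟨s, hs, t, ht, rfl⟩
  exact ⟨s, h hs, t, ht, rfl⟩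

lemma gamma_succ_le : ∀ n, lieGamma R (n + 1) ≤ lieGamma R n
  | 0 => le_top
  | 1 => le_top
  | (m + 2) => by
      show lbrk (lieGamma R (m + 2)) ⊤ ≤ lbrk (lieGamma R (m + 1)) ⊤
      apply AddSubgroup.closure_mono
      rintro x ⟨s, hs, t, ht, rfl⟩
      exact ⟨s, gamma_succ_le (m + 1) hs, t, ht, rfl⟩

lemma lowerLiePow_succ_le (n : ℕ) : lowerLiePow R (n + 1) ≤ lowerLiePow R n :=
  aprod_mono (gamma_succ_le n)

/-- `γₙ ≤ R^[n]` (uses the unit). -/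
lemma gamma_le_lowerLiePow (n : ℕ) : lieGamma R n ≤ lowerLiePow R n := by
  intro u hu
  exact AddSubgroup.subset_closure ⟨u, hu, 1, trivial, (mul_one u).symm⟩

/-- membership of brackets in the next gamma -/
lemma bracket_mem_gamma {n : ℕ} {g : R} (hg : g ∈ lieGamma R (n + 1)) (x : R) :
    g * x - x * g ∈ lieGamma R (n + 2) :=
  AddSubgroup.subset_closure ⟨g, hg, x, trivial, rfl⟩

lemma lowerLiePow_mul_right {n : ℕ} {z : R} (hz : z ∈ lowerLiePow R n) (r : R) :
    z * r ∈ lowerLiePow R n := by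
  induction hz using AddSubgroup.closure_induction with
  | mem x hx =>
      obtain ⟨s, hs, t, _, rfl⟩ := hx
      exact AddSubgroup.subset_closure ⟨s, hs, t * r, trivial, mul_assoc s t r⟩
  | zero => simpa using (lowerLiePow R n).zero_mem
  | add x y _ _ hx hy => simpa [add_mul] using add_mem hx hy
  | neg x _ hx => simpa [neg_mul] using neg_mem hx

lemma lowerLiePow_mul_left {n : ℕ} {z : R} (hz : z ∈ lowerLiePow R (n + 2)) (r : R) :
    r * z ∈ lowerLiePow R (n + 2) := by
  induction hz using AddSubgroup.closure_induction with
  | mem x hx =>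
      obtain ⟨s, hs, t, _, rfl⟩ := hx
      have h1 : s * (r * t) ∈ lowerLiePow R (n + 2) :=
        AddSubgroup.subset_closure ⟨s, hs, r * t, trivial, rfl⟩
      have h2 : (s * r - r * s) * t ∈ lowerLiePow R (n + 2) := by
        have hb : s * r - r * s ∈ lieGamma R (n + 3) := bracket_mem_gamma hs r
        exact AddSubgroup.subset_closure ⟨s * r - r * s, gamma_succ_le (n + 2) hb, t, trivial, rfl⟩
      have : r * (s * t) = s * (r * t) - (s * r - r * s) * t := by noncomm_ring
      rw [this]
      exact sub_mem h1 h2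
  | zero => simpa using (lowerLiePow R (n + 2)).zero_mem
  | add x y _ _ hx hy => simpa [mul_add] using add_mem hx hy
  | neg x _ hx => simpa [mul_neg] using neg_mem hx

end Aux

section Multinom

variable {S : Type*} [Ring S]

/-- In any ring, if `c i` are central square-zero elements, then
`(∑ c i * w i)^(k+1) = 0`. -/
lemma multinom (k : ℕ) (c w : Fin k → S)
    (hcen : ∀ i s, c i * s = s * c i) (hsq : ∀ i, c i * c i = 0) :
    (∑ i, c i * w i) ^ (k + 1) = 0 := by
  set y := ∑ i, c i * w i with hy
  -- product over a list of indices
  let pl : List (Fin k) → S := fun l => (l.map c).prod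
  have pl_nil : pl [] = 1 := rfl
  have pl_cons : ∀ j l, pl (j :: l) = c j * pl l := fun j l => by simp [pl]
  have pl_comm : ∀ l s, pl l * s = s * pl l := by
    intro l
    induction l with
    | nil => simp [pl]
    | cons a l ih =>
        intro s
        rw [pl_cons, mul_assoc, ih s, ← mul_assoc, hcen a s, mul_assoc]
  have pl_kill : ∀ (l : List (Fin k)) (j : Fin k), j ∈ l → pl l * c j = 0 := by
    intro l
    induction l with
    | nil => intro j h; simp at h
    | cons a l ih =>
        intro j hj
        rcases List.mem_cons.mp hj with h | h
        · subst h
          rw [pl_cons, mul_assoc, pl_comm l (c j), ← mul_assoc, hsq j, zero_mul]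
        · rw [pl_cons, mul_assoc, ih j h, mul_zero]
  -- the filtration subgroups
  let SP : ℕ → AddSubgroup S := fun m =>
    AddSubgroup.closure {x | ∃ l : List (Fin k), l.Nodup ∧ l.length = m ∧ ∃ s, x = pl l * s}
  have key : ∀ m, y ^ m ∈ SP m := by
    intro m
    induction m with
    | zero =>
        exact AddSubgroup.subset_closure ⟨[], List.nodup_nil, rfl, 1, by simp [pl_nil]⟩
    | succ m ih =>
        rw [pow_succ]
        have step : ∀ z ∈ SP m, z * y ∈ SP (m + 1) := by
          intro z hz
          induction hz using AddSubgroup.closure_induction with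
          | mem x hx =>
              obtain ⟨l, hnd, hlen, s, rfl⟩ := hx
              rw [hy, Finset.mul_sum]
              apply AddSubgroup.sum_mem
              intro j _
              have : pl l * s * (c j * w j) = (pl l * c j) * (s * w j) := by
                rw [mul_assoc (pl l) s, ← mul_assoc s, ← hcen j s, mul_assoc (c j), ← mul_assoc]
              rw [this]
              by_cases hjl : j ∈ l
              · rw [pl_kill l j hjl, zero_mul]
                exact (SP (m + 1)).zero_mem
              · have hplc : pl l * c j = pl (j :: l) := by
                  rw [pl_cons, ← pl_comm l (c j)]
                rw [hplc]
                exact AddSubgroup.subset_closure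
                  ⟨j :: l, List.nodup_cons.mpr ⟨hjl, hnd⟩, by simp [hlen], s * w j, rfl⟩
          | zero => simpa using (SP (m + 1)).zero_mem
          | add a b _ _ ha hb => simpa [add_mul] using add_mem ha hb
          | neg a _ ha => simpa [neg_mul] using neg_mem ha
        exact step _ ih
  have empty : SP (k + 1) ≤ ⊥ := by
    apply (AddSubgroup.closure_le ⊥).mpr
    rintro x ⟨l, hnd, hlen, s, rfl⟩
    exfalso
    have := hnd.length_le_card
    simp [hlen] at this
  have := empty (key (k + 1))
  simpa using this

end Multinom

section QuotCon

variable {R : Type*} [Ring R]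

/-- The ring congruence associated to an "ideal-like" additive subgroup. -/
def conOf (I : AddSubgroup R) (hl : ∀ (r : R) {z}, z ∈ I → r * z ∈ I)
    (hr : ∀ (r : R) {z}, z ∈ I → z * r ∈ I) : RingCon R where
  r a b := a - b ∈ I
  iseqv := ⟨fun a => by simp only [sub_self]; exact I.zero_mem,
    fun {a b} h => by simpa [neg_sub] using neg_mem h,
    fun {a b c} h1 h2 => by have := add_mem h1 h2; rwa [sub_add_sub_cancel] at this⟩
  add' := fun {a b x y} h1 h2 => by
    have h1' : a - b ∈ I := h1
    have h2' : x - y ∈ I := h2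
    show a + x - (b + y) ∈ I
    have : a + x - (b + y) = (a - b) + (x - y) := by abel
    rw [this]; exact add_mem h1' h2'
  mul' := fun {a b x y} h1 h2 => by
    have h1' : a - b ∈ I := h1
    have h2' : x - y ∈ I := h2
    show a * x - b * y ∈ I
    have : a * x - b * y = a * (x - y) + (a - b) * y := by
      rw [mul_sub, sub_mul]; abel
    rw [this]; exact add_mem (hl a h2') (hr y h1')

lemma conOf_coe_eq_zero_iff (I : AddSubgroup R) (hl hr) (z : R) :
    (z : (conOf I hl hr).Quotient) = 0 ↔ z ∈ I := by
  have : (0 : (conOf I hl hr).Quotient) = ((0 : R) : (conOf I hl hr).Quotient) := rfl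
  rw [this, RingCon.eq]
  show z - 0 ∈ I ↔ z ∈ I
  rw [sub_zero]

end QuotCon

section Step

variable {R : Type*} [Ring R]

/-- Inner representation: `s * t` for `s ∈ γ_{j+2}`. -/
lemma rep_inner {j : ℕ} {s : R} (hs : s ∈ lieGamma R (j + 2)) :
    ∀ t : R, ∃ L : List (R × R × R), (∀ q ∈ L, q.1 ∈ lieGamma R (j + 1)) ∧
      s * t = (L.map fun q => (q.1 * q.2.1 - q.2.1 * q.1) * q.2.2).sum := by
  have hs' : s ∈ lbrk (lieGamma R (j + 1)) ⊤ := hs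
  clear hs
  induction hs' using AddSubgroup.closure_induction with
  | mem u hu =>
      intro t
      obtain ⟨g, hg, x', _, rfl⟩ := hu
      refine ⟨[(g, x', t)], ?_, ?_⟩
      · intro q hq
        rw [List.mem_singleton] at hq
        subst hq
        exact hg
      · rw [List.map_cons, List.map_nil, List.sum_cons, List.sum_nil, add_zero]
  | zero => intro t
            exact ⟨[], fun q hq => absurd hq List.not_mem_nil,
              by rw [zero_mul, List.map_nil, List.sum_nil]⟩
  | add a b _ _ ha hb =>
      intro t
      obtain ⟨L1, h1, e1⟩ := ha t
      obtain ⟨L2, h2, e2⟩ := hb t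
      refine ⟨L1 ++ L2, ?_, ?_⟩
      · intro q hq
        rcases List.mem_append.mp hq with h | h
        exacts [h1 q h, h2 q h]
      · rw [add_mul, e1, e2, List.map_append, List.sum_append]
  | neg a _ ha =>
      intro t
      obtain ⟨L, h1, e1⟩ := ha (-t)
      refine ⟨L, h1, ?_⟩
      rw [neg_mul, ← mul_neg, e1]

/-- Representation lemma: every element of `R^[j+2]` is a finite sum of
`(g*x - x*g) * r` with `g ∈ γⱼ₊₁`. -/
lemma rep_list {j : ℕ} {y : R} (hy : y ∈ lowerLiePow R (j + 2)) :
    ∃ L : List (R × R × R), (∀ q ∈ L, q.1 ∈ lieGamma R (j + 1)) ∧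
      y = (L.map fun q => (q.1 * q.2.1 - q.2.1 * q.1) * q.2.2).sum := by
  induction hy using AddSubgroup.closure_induction with
  | mem x hx =>
      obtain ⟨s, hs, t, _, rfl⟩ := hx
      exact rep_inner hs t
  | zero => exact ⟨[], fun q hq => absurd hq List.not_mem_nil, rfl⟩
  | add a b _ _ ha hb =>
      obtain ⟨L1, h1, e1⟩ := ha
      obtain ⟨L2, h2, e2⟩ := hb
      refine ⟨L1 ++ L2, ?_, ?_⟩
      · intro q hq
        rcases List.mem_append.mp hq with h | h
        exacts [h1 q h, h2 q h]
      · rw [e1, e2, List.map_append, List.sum_append]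
  | neg a _ ha =>
      obtain ⟨L, h1, e1⟩ := ha
      refine ⟨L.map fun q => (q.1, q.2.1, -q.2.2), ?_, ?_⟩
      · intro q hq
        obtain ⟨q', hq', rfl⟩ := List.mem_map.mp hq
        exact h1 q' hq'
      · rw [e1]
        clear h1 e1
        induction L with
        | nil => simp
        | cons a' L ih =>
            simp only [List.map_cons, List.sum_cons, List.map_map, Function.comp, mul_neg]
            rw [neg_add, ih]
            simp only [List.map_map, Function.comp, mul_neg]
          
lemma list_sum_get {M : Type*} [AddCommMonoid M] {α : Type*} (L : List α) (f : α → M) :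
    (L.map f).sum = ∑ i : Fin L.length, f (L.get i) := by
  induction L with
  | nil => simp
  | cons a L ih =>
      rw [List.map_cons, List.sum_cons, ih]
      show f a + ∑ i : Fin L.length, f (L.get i)
        = ∑ i : Fin (L.length + 1), f ((a :: L).get i)
      rw [Fin.sum_univ_succ]
      rfl

/-- The key step: any element of `R^[n]` has a power in `R^[n+1]` (for `n ≥ 2`). -/
lemma step (j : ℕ) (y : R) (hy : y ∈ lowerLiePow R (j + 2)) :
    ∃ N, 1 ≤ N ∧ y ^ N ∈ lowerLiePow R (j + 3) := by
  classical
  set I := lowerLiePow R (j + 3) with hI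
  have hl : ∀ (r : R) {z}, z ∈ I → r * z ∈ I := fun r {z} hz => lowerLiePow_mul_left hz r
  have hr : ∀ (r : R) {z}, z ∈ I → z * r ∈ I := fun r {z} hz => lowerLiePow_mul_right hz r
  have hgam : lieGamma R (j + 3) ≤ I := gamma_le_lowerLiePow (j + 3)
  obtain ⟨L, hL, hyL⟩ := rep_list hy
  set con := conOf I hl hr with hcon
  let π : R →+* con.Quotient := con.mk'
  have hπ : ∀ z : R, π z = (z : con.Quotient) := fun z => rfl
  have hzero : ∀ z : R, (z : con.Quotient) = 0 ↔ z ∈ I := conOf_coe_eq_zero_iff I hl hr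
  -- the images of the commutators
  let k := L.length
  let c : Fin k → con.Quotient := fun i => π ((L.get i).1 * (L.get i).2.1 - (L.get i).2.1 * (L.get i).1)
  let w : Fin k → con.Quotient := fun i => π ((L.get i).2.2)
  have hcen : ∀ i s, c i * s = s * c i := by
    intro i s
    induction s using Quot.ind with
    | _ s =>
      set u := (L.get i).1 * (L.get i).2.1 - (L.get i).2.1 * (L.get i).1 with hu
      have hub : u ∈ lieGamma R (j + 2) := bracket_mem_gamma (hL _ (L.get_mem i)) _
      have hbr : u * s - s * u ∈ I := hgam (bracket_mem_gamma hub s)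
      show π u * π s = π s * π u
      rw [← map_mul, ← map_mul]
      have : (↑(u * s) : con.Quotient) = ↑(s * u) := by
        rw [RingCon.eq]
        exact hbr
      exact this
  have hsq : ∀ i, c i * c i = 0 := by
    intro i
    set g := (L.get i).1 with hgdef
    set x := (L.get i).2.1 with hxdef
    have hg : g ∈ lieGamma R (j + 1) := hL _ (L.get_mem i)
    set u := g * x - x * g with hu
    have hub : u ∈ lieGamma R (j + 2) := bracket_mem_gamma hg x
    -- the magic identity : u*u = (v*x - x*v) - g*(u*x - x*u), with v = g*(g*x)-(g*x)*g
    set v := g * (g * x) - (g * x) * g with hv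
    have hvb : v ∈ lieGamma R (j + 2) := bracket_mem_gamma hg (g * x)
    have hident : u * u = (v * x - x * v) - g * (u * x - x * u) := by
      rw [hu, hv]; noncomm_ring
    have hmem : u * u ∈ I := by
      rw [hident]
      exact sub_mem (hgam (bracket_mem_gamma hvb x)) (hl g (hgam (bracket_mem_gamma hub x)))
    show π u * π u = 0
    rw [← map_mul, hπ, hzero]
    exact hmem
  refine ⟨k + 1, by omega, ?_⟩
  have hπy : π y = ∑ i, c i * w i := by
    rw [hyL, list_sum_get, map_sum]
    exact Finset.sum_congr rfl fun i _ => map_mul π _ _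
  have : π (y ^ (k + 1)) = 0 := by
    rw [map_pow, hπy]
    exact multinom k c w hcen hsq
  rw [hπ, hzero] at this
  exact this

end Step

/-- If `R` is a lower Lie nilpotent ring of prime characteristic `p`
(say `R^[t] = 0`), then `R^[2]` is a nil ideal: every `x ∈ R^[2]` satisfies
`x^{pˢ} = 0` for some `s`. -/
theorem stmt_17 {R : Type*} [Ring R] (p : ℕ) [Fact p.Prime] [CharP R p]
    (t : ℕ) (ht : lowerLiePow R t = ⊥) :
    ∀ x ∈ lowerLiePow R 2, ∃ s : ℕ, x ^ p ^ s = 0 := by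
  intro x hx
  -- climb the chain
  have chain : ∀ n : ℕ, ∃ N, 1 ≤ N ∧ x ^ N ∈ lowerLiePow R (n + 2) := by
    intro n
    induction n with
    | zero => exact ⟨1, le_refl 1, by simpa using hx⟩
    | succ n ih =>
        obtain ⟨N, hN1, hN⟩ := ih
        obtain ⟨M, hM1, hM⟩ := step n (x ^ N) hN
        exact ⟨N * M, Nat.one_le_iff_ne_zero.mpr (by positivity), by rwa [pow_mul]⟩
  obtain ⟨N, hN1, hN⟩ := chain t
  have hle : lowerLiePow R (t + 2) ≤ lowerLiePow R t :=
    le_trans (lowerLiePow_succ_le (t + 1)) (lowerLiePow_succ_le t)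
  have hxN : x ^ N = 0 := by
    have := hle hN
    rwa [ht, AddSubgroup.mem_bot] at this
  refine ⟨N, ?_⟩
  have hp2 : 2 ≤ p := (Fact.out : p.Prime).two_le
  have hNle : N ≤ p ^ N := by
    calc N ≤ 2 ^ N := Nat.le_of_lt (Nat.lt_two_pow_self (n := N))
    _ ≤ p ^ N := Nat.pow_le_pow_left hp2 N
  calc x ^ p ^ N = x ^ N * x ^ (p ^ N - N) := by rw [← pow_add, Nat.add_sub_cancel' hNle]
  _ = 0 := by rw [hxN, zero_mul]
end
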